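/- Let f: A → B be a surjective rack homomorphism between racks. If a and b in A are endpoints of an f-horn (i.e. there exist x ∈ A, n ∈ ℕ, elements a_i, b_i ∈ A with f(a_i) = f(b_i), and signs δ_i ∈ {−1,1}, such that a = x ◁^{δ_1} a_1 ··· ◁^{δ_n} a_n and b = x ◁^{δ_1} b_1 ··· ◁^{δ_n} b_n), then the set of such pairs (a,b) forms a congruence on A equal to the centralizing relation C₁(f) generated by the pairs ((x ◁ a) ◁⁻¹ b, x) with f(a) = f(b). -/

import Mathlib

/-- A rack: a set with operations `◁`, `◁⁻¹` satisfying (R1) and (R2). -/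
class PaperRack (X : Type*) where
  act : X → X → X
  inv : X → X → X
  r1a : ∀ x y, inv (act x y) y = x
  r1b : ∀ x y, act (inv x y) y = x
  r2 : ∀ x y z, act (act x y) z = act (act x z) (act y z)

infixl:70 " ◁ " => PaperRack.act
infixl:70 " ◁⁻¹ " => PaperRack.inv

/-- `x ◁^{δ₁} c₁ ⋯ ◁^{δₙ} cₙ`: the successive action on `x` of a list of elements
with signs (`true` for `◁`, `false` for `◁⁻¹`). -/
def foldAct {X : Type*} [PaperRack X] (x : X) (l : List (X × Bool)) : X :=
  l.foldl (fun y p => if p.2 then y ◁ p.1 else y ◁⁻¹ p.1) x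

/-- The relation "being the two endpoints of an `f`-horn": there are `x`, elements
`aᵢ, bᵢ` with `f aᵢ = f bᵢ` and signs `δᵢ`, with `a = x ◁^{δ₁} a₁ ⋯ ◁^{δₙ} aₙ` and
`b = x ◁^{δ₁} b₁ ⋯ ◁^{δₙ} bₙ`. -/
def HornRel {A B : Type*} [PaperRack A] (f : A → B) (a b : A) : Prop :=
  ∃ (x : A) (l : List (A × A × Bool)),
    (∀ q ∈ l, f q.1 = f q.2.1) ∧
    a = foldAct x (l.map fun q => (q.1, q.2.2)) ∧
    b = foldAct x (l.map fun q => (q.2.1, q.2.2))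

/-- The centralizing relation `C₁(f)`: the smallest congruence (equivalence
relation compatible with `◁`) containing the pairs `((x ◁ a) ◁⁻¹ b, x)` with
`f a = f b`. -/
def C1 {A B : Type*} [PaperRack A] (f : A → B) (a b : A) : Prop :=
  ∀ S : A → A → Prop, Equivalence S →
    (∀ x y u v, S x y → S u v → S (x ◁ u) (y ◁ v)) →
    (∀ x u v : A, f u = f v → S ((x ◁ u) ◁⁻¹ v) x) →
    S a b

namespace HornProofAux

variable {A B : Type*} [PaperRack A]

theorem act_right_inj (c : A) {x y : A} (h : x ◁ c = y ◁ c) : x = y := by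
  have := congrArg (fun z => z ◁⁻¹ c) h
  simpa [PaperRack.r1a] using this

theorem e2 (x y c : A) : (x ◁⁻¹ y) ◁ c = (x ◁ c) ◁⁻¹ (y ◁ c) := by
  apply act_right_inj (y ◁ c)
  rw [PaperRack.r1b, ← PaperRack.r2, PaperRack.r1b]

theorem e3 (x y c : A) : (x ◁ y) ◁⁻¹ c = (x ◁⁻¹ c) ◁ (y ◁⁻¹ c) := by
  apply act_right_inj c
  rw [PaperRack.r1b, PaperRack.r2, PaperRack.r1b, PaperRack.r1b]

theorem e4 (x y c : A) : (x ◁⁻¹ y) ◁⁻¹ c = (x ◁⁻¹ c) ◁⁻¹ (y ◁⁻¹ c) := by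
  apply act_right_inj c
  rw [PaperRack.r1b, e2, PaperRack.r1b, PaperRack.r1b]

/-- signed action -/
def sact (x c : A) (δ : Bool) : A := if δ then x ◁ c else x ◁⁻¹ c

theorem sact_cancel (x c : A) (δ : Bool) : sact (sact x c δ) c (!δ) = x := by
  cases δ <;> simp [sact, PaperRack.r1a, PaperRack.r1b]

theorem sact_cancel' (x c : A) (δ : Bool) : sact (sact x c (!δ)) c δ = x := by
  have := sact_cancel x c (!δ); simpa using this

theorem sact_act (x y c : A) (δ : Bool) :
    sact (x ◁ y) c δ = sact x c δ ◁ sact y c δ := by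
  cases δ
  · exact e3 x y c
  · exact PaperRack.r2 x y c

theorem sact_inv (x y c : A) (δ : Bool) :
    sact (x ◁⁻¹ y) c δ = sact x c δ ◁⁻¹ sact y c δ := by
  cases δ
  · exact e4 x y c
  · exact e2 x y c

theorem sact_sact (t u c : A) (δ' δ : Bool) :
    sact (sact t u δ') c δ = sact (sact t c δ) (sact u c δ) δ' := by
  cases δ'
  · simpa [sact] using sact_inv t u c δ
  · simpa [sact] using sact_act t u c δ

theorem f_sact [PaperRack B] (f : A → B) (hact : ∀ x y : A, f (x ◁ y) = f x ◁ f y)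
    (hinv : ∀ x y : A, f (x ◁⁻¹ y) = f x ◁⁻¹ f y) (x c : A) (δ : Bool) :
    f (sact x c δ) = sact (f x) (f c) δ := by
  cases δ <;> simp [sact, hact, hinv]

theorem foldAct_append (x : A) (l m : List (A × Bool)) :
    foldAct x (l ++ m) = foldAct (foldAct x l) m :=
  List.foldl_append

theorem foldAct_concat (x : A) (l : List (A × Bool)) (p : A × Bool) :
    foldAct x (l ++ [p]) = sact (foldAct x l) p.1 p.2 := by
  rw [foldAct_append]; rfl

/-- one elementary move: endpoints of a single-entry horn -/
def Mv (f : A → B) (z w : A) : Prop :=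
  ∃ t u v : A, ∃ δ : Bool, f u = f v ∧ z = sact t u δ ∧ w = sact t v δ

theorem mv_symm {f : A → B} {z w : A} (h : Mv f z w) : Mv f w z := by
  obtain ⟨t, u, v, δ, huv, hz, hw⟩ := h
  exact ⟨t, v, u, δ, huv.symm, hw, hz⟩

theorem mv_horn {f : A → B} {z w : A} (h : Mv f z w) : HornRel f z w := by
  obtain ⟨t, u, v, δ, huv, hz, hw⟩ := h
  exact ⟨t, [(u, v, δ)], by simpa using huv, hz, hw⟩

section Hom

variable [PaperRack B] {f : A → B}
variable (hact : ∀ x y : A, f (x ◁ y) = f x ◁ f y)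
variable (hinv : ∀ x y : A, f (x ◁⁻¹ y) = f x ◁⁻¹ f y)

include hact hinv

theorem mv_map {z w : A} (c : A) (δ : Bool) (h : Mv f z w) :
    Mv f (sact z c δ) (sact w c δ) := by
  obtain ⟨t, u, v, δ', huv, hz, hw⟩ := h
  refine ⟨sact t c δ, sact u c δ, sact v c δ, δ', ?_, ?_, ?_⟩
  · rw [f_sact f hact hinv, f_sact f hact hinv, huv]
  · rw [hz, sact_sact]
  · rw [hw, sact_sact]

theorem rtg_map {z w : A} (c : A) (δ : Bool) (h : Relation.ReflTransGen (Mv f) z w) :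
    Relation.ReflTransGen (Mv f) (sact z c δ) (sact w c δ) :=
  Relation.ReflTransGen.lift (fun x => sact x c δ) (fun _ _ hh => mv_map hact hinv c δ hh) _ _ h

theorem horn_to_rtg : ∀ (l : List (A × A × Bool)), (∀ q ∈ l, f q.1 = f q.2.1) → ∀ x : A,
    Relation.ReflTransGen (Mv f)
      (foldAct x (l.map fun q => (q.1, q.2.2)))
      (foldAct x (l.map fun q => (q.2.1, q.2.2))) := by
  intro l
  induction l using List.reverseRecOn with
  | nil => intro _ x; exact .refl
  | append_singleton l q ih =>
      intro hl x
      have hl' : ∀ q ∈ l, f q.1 = f q.2.1 := fun q hq => hl q (List.mem_append_left _ hq)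
      rw [List.map_append, List.map_append, List.map_singleton, List.map_singleton,
        foldAct_concat, foldAct_concat]
      refine Relation.ReflTransGen.tail (rtg_map hact hinv q.1 q.2.2 (ih hl' x)) ?_
      exact ⟨foldAct x (l.map fun q => (q.2.1, q.2.2)), q.1, q.2.1, q.2.2,
        hl q (List.mem_append_right _ (List.mem_singleton_self _)), rfl, rfl⟩

end Hom

theorem rtg_to_horn {f : A → B} {a b : A} (h : Relation.ReflTransGen (Mv f) a b) :
    HornRel f a b := by
  induction h with
  | refl => exact ⟨a, [], by simp, rfl, rfl⟩
  | tail _ hmv ih =>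
      obtain ⟨x, l, hl, ha, hw⟩ := ih
      obtain ⟨t, u, v, δ, huv, hwz, hbz⟩ := hmv
      refine ⟨x, l ++ [(u, u, !δ), (u, v, δ)], ?_, ?_, ?_⟩
      · intro q hq
        rcases List.mem_append.1 hq with h1 | h1
        · exact hl q h1
        · simp only [List.mem_cons, List.mem_singleton] at h1
          rcases h1 with rfl | rfl | h1
          · rfl
          · exact huv
          · exact absurd h1 List.not_mem_nil
      · rw [List.map_append, foldAct_append]
        show _ = sact (sact _ u (!δ)) u δ
        rw [← ha, sact_cancel']
      · rw [List.map_append, foldAct_append]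
        show _ = sact (sact _ u (!δ)) v δ
        rw [← hw, hwz, sact_cancel, hbz]

end HornProofAux

namespace HornProofAux

variable {A B : Type*} [PaperRack A] [PaperRack B] {f : A → B}
variable (hact : ∀ x y : A, f (x ◁ y) = f x ◁ f y)
variable (hinv : ∀ x y : A, f (x ◁⁻¹ y) = f x ◁⁻¹ f y)

theorem horn_refl (a : A) : HornRel f a a := ⟨a, [], by simp, rfl, rfl⟩

theorem act_act (b t u : A) : ((b ◁⁻¹ u) ◁ t) ◁ u = b ◁ (t ◁ u) := by
  rw [PaperRack.r2, PaperRack.r1b]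

theorem act_inv' (b t u : A) : ((b ◁ u) ◁ t) ◁⁻¹ u = b ◁ (t ◁⁻¹ u) := by
  rw [e3, PaperRack.r1a]

theorem mv_act_left (b : A) {c d : A} (h : Mv f c d) : HornRel f (b ◁ c) (b ◁ d) := by
  obtain ⟨t, u, v, δ, huv, rfl, rfl⟩ := h
  cases δ
  · refine ⟨b, [(u, v, true), (t, t, true), (u, v, false)], ?_, ?_, ?_⟩
    · simp [huv]
    · show b ◁ (t ◁⁻¹ u) = ((b ◁ u) ◁ t) ◁⁻¹ u
      exact (act_inv' b t u).symm
    · show b ◁ (t ◁⁻¹ v) = ((b ◁ v) ◁ t) ◁⁻¹ v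
      exact (act_inv' b t v).symm
  · refine ⟨b, [(u, v, false), (t, t, true), (u, v, true)], ?_, ?_, ?_⟩
    · simp [huv]
    · show b ◁ (t ◁ u) = ((b ◁⁻¹ u) ◁ t) ◁ u
      exact (act_act b t u).symm
    · show b ◁ (t ◁ v) = ((b ◁⁻¹ v) ◁ t) ◁ v
      exact (act_act b t v).symm

include hact hinv

theorem horn_iff_rtg {a b : A} : HornRel f a b ↔ Relation.ReflTransGen (Mv f) a b := by
  constructor
  · rintro ⟨x, l, hl, rfl, rfl⟩
    exact horn_to_rtg hact hinv l hl x
  · exact rtg_to_horn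

theorem horn_symm {a b : A} (h : HornRel f a b) : HornRel f b a :=
  rtg_to_horn (by
    haveI : Std.Symm (Mv f) := ⟨fun _ _ => mv_symm⟩
    exact Std.Symm.symm _ _ ((horn_iff_rtg hact hinv).1 h))

theorem horn_trans {a b c : A} (h1 : HornRel f a b) (h2 : HornRel f b c) :
    HornRel f a c :=
  rtg_to_horn (((horn_iff_rtg hact hinv).1 h1).trans ((horn_iff_rtg hact hinv).1 h2))

theorem horn_act_left (b : A) {c d : A} (h : HornRel f c d) :
    HornRel f (b ◁ c) (b ◁ d) := by
  have h' := (horn_iff_rtg hact hinv).1 h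
  clear h
  induction h' with
  | refl => exact horn_refl (b ◁ c)
  | tail _ hmv ih => exact horn_trans hact hinv ih (mv_act_left b hmv)

theorem horn_act_right {a b : A} (c : A) (h : HornRel f a b) :
    HornRel f (a ◁ c) (b ◁ c) := by
  have h' := rtg_map hact hinv c true ((horn_iff_rtg hact hinv).1 h)
  exact rtg_to_horn h'

theorem horn_compat {a b c d : A} (h1 : HornRel f a b) (h2 : HornRel f c d) :
    HornRel f (a ◁ c) (b ◁ d) :=
  horn_trans hact hinv (horn_act_right hact hinv c h1) (horn_act_left hact hinv b h2)

theorem horn_gen (x u v : A) (huv : f u = f v) : HornRel f ((x ◁ u) ◁⁻¹ v) x := by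
  have hmv : Mv f x ((x ◁ u) ◁⁻¹ v) :=
    ⟨x ◁ u, u, v, false, huv, (PaperRack.r1a x u).symm, rfl⟩
  exact horn_symm hact hinv (mv_horn hmv)

theorem horn_to_c1 {a b : A} (h : HornRel f a b) : C1 f a b := by
  intro S hS hcomp hgen
  have key : ∀ z w : A, Mv f z w → S z w := by
    rintro z w ⟨t, u, v, δ, huv, rfl, rfl⟩
    cases δ
    · have h1 := hgen (t ◁⁻¹ u) u v huv
      rw [PaperRack.r1b] at h1
      exact hS.symm h1
    · have h1 := hgen t u v huv
      have h2 := hcomp _ _ v v h1 (hS.refl v)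
      rw [PaperRack.r1b] at h2
      exact h2
  have h' := (horn_iff_rtg hact hinv).1 h
  clear h
  induction h' with
  | refl => exact hS.refl _
  | tail _ hmv ih => exact hS.trans ih (key _ _ hmv)

end HornProofAux

/-- For a surjective rack homomorphism `f`, the pairs of endpoints of `f`-horns
form a congruence on `A`, which is exactly the centralizing relation `C₁(f)`. -/
theorem hornRel_is_congruence_eq_C1 {A B : Type*} [PaperRack A] [PaperRack B]
    (f : A → B)
    (hact : ∀ x y : A, f (x ◁ y) = f x ◁ f y)
    (hinv : ∀ x y : A, f (x ◁⁻¹ y) = f x ◁⁻¹ f y)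
    (hsurj : Function.Surjective f) :
    Equivalence (HornRel f) ∧
    (∀ a b c d : A, HornRel f a b → HornRel f c d →
      HornRel f (a ◁ c) (b ◁ d)) ∧
    (∀ a b : A, HornRel f a b ↔ C1 f a b) := by
  refine ⟨⟨fun a => HornProofAux.horn_refl a, fun h => HornProofAux.horn_symm hact hinv h,
      fun h1 h2 => HornProofAux.horn_trans hact hinv h1 h2⟩,
    fun a b c d h1 h2 => HornProofAux.horn_compat hact hinv h1 h2,
    fun a b => ⟨fun h => HornProofAux.horn_to_c1 hact hinv h, fun h => ?_⟩⟩
  exact h (HornRel f)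
    ⟨fun a => HornProofAux.horn_refl a, fun h => HornProofAux.horn_symm hact hinv h,
      fun h1 h2 => HornProofAux.horn_trans hact hinv h1 h2⟩
    (fun x y u v h1 h2 => HornProofAux.horn_compat hact hinv h1 h2)
    (fun x u v huv => HornProofAux.horn_gen hact hinv x u v huv)
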